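/- Let T be a locally compact Hausdorff topological semigroup with identity, μ a Borel probability measure on T, T_μ the closed subsemigroup generated by the support of μ, and R_μ := {s ∈ T_μ : Σ_{n≥1} μ^{*n}(V) = +∞ for every open neighborhood V of s} the conservative part. Then R_μ is a closed subset of T_μ and R_μ·T_μ ⊆ R_μ, i.e. R_μ is a closed right ideal of T_μ. -/

import Mathlib

open MeasureTheory

/-- The `n`-fold convolution power of a measure on a monoid:
`μ^{*0} = δ_e` and `μ^{*(n+1)} = μ^{*n} * μ`. -/
noncomputable def convPow {T : Type*} [MeasurableSpace T] [Monoid T]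
    (μ : Measure T) : ℕ → Measure T
  | 0 => Measure.dirac 1
  | n + 1 => Measure.map (fun p : T × T => p.1 * p.2) ((convPow μ n).prod μ)

/-- The (topological) support of a measure. -/
def msupport {T : Type*} [TopologicalSpace T] [MeasurableSpace T]
    (ν : Measure T) : Set T :=
  {t | ∀ V : Set T, IsOpen V → t ∈ V → 0 < ν V}

/-- The closed subsemigroup generated by the support of `μ`. -/
def Tmu {T : Type*} [TopologicalSpace T] [MeasurableSpace T] [Monoid T]
    (μ : Measure T) : Set T :=
  closure (⋃ n : ℕ, msupport (convPow μ n))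

/-- The conservative part of `T_μ`. -/
def Rmu {T : Type*} [TopologicalSpace T] [MeasurableSpace T] [Monoid T]
    (μ : Measure T) : Set T :=
  {s ∈ Tmu μ | ∀ V : Set T, IsOpen V → s ∈ V →
    (∑' n : ℕ, convPow μ (n + 1) V) = ⊤}

section Aux

variable {T : Type*} [TopologicalSpace T] [T2Space T]
    [Monoid T] [ContinuousMul T] [MeasurableSpace T] [BorelSpace T]
    (μ : Measure T) [IsProbabilityMeasure μ]

lemma convPow_univ_le (n : ℕ) : convPow μ n Set.univ ≤ 1 := by
  induction n with
  | zero => simp [convPow]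
  | succ n ih =>
    haveI : IsFiniteMeasure (convPow μ n) :=
      ⟨lt_of_le_of_lt ih ENNReal.one_lt_top⟩
    by_cases h : AEMeasurable (fun p : T × T => p.1 * p.2) ((convPow μ n).prod μ)
    · rw [show convPow μ (n + 1)
          = Measure.map (fun p : T × T => p.1 * p.2) ((convPow μ n).prod μ) from rfl,
        Measure.map_apply_of_aemeasurable h MeasurableSet.univ, Set.preimage_univ,
        ← Set.univ_prod_univ, Measure.prod_prod]
      calc convPow μ n Set.univ * μ Set.univ ≤ 1 * 1 :=
            mul_le_mul' ih (le_of_eq measure_univ)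
        _ = 1 := by simp
    · rw [show convPow μ (n + 1)
          = Measure.map (fun p : T × T => p.1 * p.2) ((convPow μ n).prod μ) from rfl,
        Measure.map_of_not_aemeasurable h]
      simp

lemma convPow_finite (n : ℕ) : IsFiniteMeasure (convPow μ n) :=
  ⟨lt_of_le_of_lt (convPow_univ_le μ n) ENNReal.one_lt_top⟩

lemma convPow_zero_succ {n : ℕ} (h : convPow μ n = 0) : convPow μ (n + 1) = 0 := by
  rw [show convPow μ (n + 1)
      = Measure.map (fun p : T × T => p.1 * p.2) ((convPow μ n).prod μ) from rfl,
    h, Measure.zero_prod, Measure.map_zero]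

lemma convPow_zero_of_le {n m : ℕ} (hnm : n ≤ m) (h : convPow μ n = 0) :
    convPow μ m = 0 := by
  induction m with
  | zero => exact (Nat.le_zero.mp hnm) ▸ h
  | succ m ih =>
    rcases Nat.lt_or_ge n (m + 1) with h1 | h1
    · exact convPow_zero_succ μ (ih (Nat.lt_succ_iff.mp h1))
    · exact (le_antisymm hnm h1) ▸ h

/-- From membership in `Rmu` we get that all convolution powers are nonzero, hence
multiplication is a.e.-measurable w.r.t. all relevant product measures. -/
lemma aemeasurable_of_mem_Rmu {r : T} (hr : r ∈ Rmu μ) (k : ℕ) :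
    AEMeasurable (fun p : T × T => p.1 * p.2) ((convPow μ k).prod μ) := by
  by_contra h
  have hzero : convPow μ (k + 1) = 0 := by
    rw [show convPow μ (k + 1)
        = Measure.map (fun p : T × T => p.1 * p.2) ((convPow μ k).prod μ) from rfl,
      Measure.map_of_not_aemeasurable h]
  have htop : (∑' n : ℕ, convPow μ (n + 1) (Set.univ : Set T)) = ⊤ :=
    hr.2 Set.univ isOpen_univ (Set.mem_univ _)
  have hb : (∑' n : ℕ, convPow μ (n + 1) (Set.univ : Set T))
      = ∑ n ∈ Finset.range (k + 1), convPow μ (n + 1) (Set.univ : Set T) := by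
    refine tsum_eq_sum ?_
    intro n hn
    have hkn : k + 1 ≤ n + 1 := by
      simp only [Finset.mem_range, not_lt] at hn
      omega
    rw [convPow_zero_of_le μ hkn hzero]
    rfl
  rw [hb] at htop
  have hlt : (∑ n ∈ Finset.range (k + 1), convPow μ (n + 1) (Set.univ : Set T)) < ⊤ := by
    refine ENNReal.sum_lt_top.mpr ?_
    intro n _
    exact lt_of_le_of_lt (convPow_univ_le μ (n + 1)) ENNReal.one_lt_top
  exact (ne_of_lt hlt) htop

/-- Slice formula: disintegration of one convolution step along the second coordinate. -/
lemma convPow_succ_slice (k : ℕ)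
    (hk : AEMeasurable (fun p : T × T => p.1 * p.2) ((convPow μ k).prod μ))
    {S : Set T} (hS : IsOpen S) :
    convPow μ (k + 1) S = ∫⁻ y, convPow μ k ((fun x => x * y) ⁻¹' S) ∂μ := by
  haveI : IsFiniteMeasure (convPow μ k) := convPow_finite μ k
  set ν := convPow μ k with hν
  obtain ⟨g, hg, hgeq⟩ := hk
  have h1 : convPow μ (k + 1) S = Measure.map g (ν.prod μ) S := by
    rw [show convPow μ (k + 1)
        = Measure.map (fun p : T × T => p.1 * p.2) (ν.prod μ) from rfl,
      Measure.map_congr hgeq]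
  rw [h1, Measure.map_apply hg hS.measurableSet,
    Measure.prod_apply_symm (hg hS.measurableSet)]
  refine lintegral_congr_ae ?_
  have hqmp : Measure.QuasiMeasurePreserving Prod.swap (μ.prod ν) (ν.prod μ) :=
    Measure.measurePreserving_swap.quasiMeasurePreserving
  have hswap : ∀ᵐ q ∂(μ.prod ν), q.2 * q.1 = g (q.2, q.1) := hqmp.ae hgeq
  have h2 := Measure.ae_ae_of_ae_prod hswap
  filter_upwards [h2] with y hy
  refine (measure_congr ?_).symm
  filter_upwards [hy] with x hx
  show (x * y ∈ S) = (g (x, y) ∈ S)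
  rw [hx]

/-- Key convolution inequality. -/
lemma convPow_mul_le
    (hAE : ∀ k, AEMeasurable (fun p : T × T => p.1 * p.2) ((convPow μ k).prod μ))
    (m : ℕ) : ∀ (n : ℕ) (U W V : Set T), IsOpen U → IsOpen W → IsOpen V →
      (∀ u ∈ U, ∀ w ∈ W, u * w ∈ V) →
      convPow μ n U * convPow μ m W ≤ convPow μ (n + m) V := by
  induction m with
  | zero =>
    intro n U W V hU hW hV hUW
    by_cases h1 : (1 : T) ∈ W
    · have hUV : U ⊆ V := fun u hu => by
        have := hUW u hu 1 h1
        rwa [mul_one] at this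
      calc convPow μ n U * convPow μ 0 W ≤ convPow μ n U * 1 := by
            refine mul_le_mul_right ?_ _
            rw [show convPow μ 0 = Measure.dirac 1 from rfl,
              Measure.dirac_apply' 1 hW.measurableSet]
            by_cases h : (1 : T) ∈ W <;> simp [h]
        _ = convPow μ n U := mul_one _
        _ ≤ convPow μ (n + 0) V := measure_mono hUV
    · have : convPow μ 0 W = 0 := by
        rw [show convPow μ 0 = Measure.dirac 1 from rfl,
          Measure.dirac_apply' 1 hW.measurableSet]
        simp [h1]
      rw [this, mul_zero]
      exact zero_le
  | succ m ih =>
    intro n U W V hU hW hV hUW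
    have hslW := convPow_succ_slice μ m (hAE m) hW
    have hslV := convPow_succ_slice μ (n + m) (hAE (n + m)) hV
    have hidx : n + (m + 1) = (n + m) + 1 := by omega
    rw [hidx, hslV, hslW]
    have hfin : convPow μ n U ≠ ⊤ :=
      ne_of_lt (lt_of_le_of_lt (le_trans (measure_mono (Set.subset_univ U))
        (convPow_univ_le μ n)) ENNReal.one_lt_top)
    rw [← lintegral_const_mul' (convPow μ n U) _ hfin]
    refine lintegral_mono fun y => ?_
    exact ih n U ((fun x => x * y) ⁻¹' W) ((fun x => x * y) ⁻¹' V) hU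
      (hW.preimage (continuous_mul_right y)) (hV.preimage (continuous_mul_right y))
      (fun u hu w hw => by
        simp only [Set.mem_preimage] at hw ⊢
        rw [mul_assoc]
        exact hUW u hu (w * y) hw)

/-- Finding open rectangles inside preimages of `mul`. -/
lemma exists_open_mul_subset {a b : T} {V : Set T} (hV : IsOpen V) (hab : a * b ∈ V) :
    ∃ U W : Set T, IsOpen U ∧ IsOpen W ∧ a ∈ U ∧ b ∈ W ∧ ∀ u ∈ U, ∀ w ∈ W, u * w ∈ V := by
  have hcont : Continuous fun p : T × T => p.1 * p.2 := continuous_mul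
  have hopen : IsOpen ((fun p : T × T => p.1 * p.2) ⁻¹' V) := hV.preimage hcont
  obtain ⟨U, W, hUo, hWo, haU, hbW, hsub⟩ :=
    isOpen_prod_iff.mp hopen a b (by simpa using hab)
  exact ⟨U, W, hUo, hWo, haU, hbW, fun u hu w hw => by
    have := hsub (show (u, w) ∈ U ×ˢ W from ⟨hu, hw⟩)
    simpa using this⟩

end Aux

/-- `R_μ` is a closed right ideal of `T_μ`. -/
theorem stmt12 {T : Type*} [TopologicalSpace T] [T2Space T] [LocallyCompactSpace T]
    [Monoid T] [ContinuousMul T] [MeasurableSpace T] [BorelSpace T]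
    (μ : Measure T) [IsProbabilityMeasure μ] :
    IsClosed (Rmu μ) ∧ ∀ r ∈ Rmu μ, ∀ s ∈ Tmu μ, r * s ∈ Rmu μ := by
  constructor
  · -- closedness
    have hC : IsClosed {s : T | ∀ V : Set T, IsOpen V → s ∈ V →
        (∑' n : ℕ, convPow μ (n + 1) V) = ⊤} := by
      rw [← closure_subset_iff_isClosed]
      intro s hs V hV hsV
      obtain ⟨a, haV, haC⟩ := mem_closure_iff.mp hs V hV hsV
      exact haC V hV haV
    have : Rmu μ = Tmu μ ∩ {s : T | ∀ V : Set T, IsOpen V → s ∈ V →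
        (∑' n : ℕ, convPow μ (n + 1) V) = ⊤} := rfl
    rw [this]
    exact IsClosed.inter isClosed_closure hC
  · -- right ideal
    intro r hr s hs
    have hAE : ∀ k, AEMeasurable (fun p : T × T => p.1 * p.2) ((convPow μ k).prod μ) :=
      aemeasurable_of_mem_Rmu μ hr
    have hkey := convPow_mul_le μ hAE
    constructor
    · -- r * s ∈ Tmu μ
      rw [Tmu, mem_closure_iff]
      intro V hV hrsV
      obtain ⟨U, W, hUo, hWo, hrU, hsW, hUW⟩ := exists_open_mul_subset hV hrsV
      -- find support points
      obtain ⟨u, huU, hu⟩ := mem_closure_iff.mp hr.1 U hUo hrU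
      obtain ⟨w, hwW, hw⟩ := mem_closure_iff.mp hs W hWo hsW
      obtain ⟨Sn, ⟨n, rfl⟩, huS⟩ := hu
      obtain ⟨Sm, ⟨m, rfl⟩, hwS⟩ := hw
      refine ⟨u * w, hUW u huU w hwW, Set.mem_iUnion.mpr ⟨n + m, ?_⟩⟩
      intro V' hV' huwV'
      obtain ⟨U', W', hU'o, hW'o, huU', hwW', hUW'⟩ := exists_open_mul_subset hV' huwV'
      have h1 : 0 < convPow μ n U' := huS U' hU'o huU'
      have h2 : 0 < convPow μ m W' := hwS W' hW'o hwW'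
      calc (0 : ENNReal) < convPow μ n U' * convPow μ m W' := ENNReal.mul_pos h1.ne' h2.ne'
        _ ≤ convPow μ (n + m) V' := hkey m n U' W' V' hU'o hW'o hV' hUW'
    · -- sum condition
      intro V hV hrsV
      obtain ⟨U, W, hUo, hWo, hrU, hsW, hUW⟩ := exists_open_mul_subset hV hrsV
      obtain ⟨w, hwW, hw⟩ := mem_closure_iff.mp hs W hWo hsW
      obtain ⟨Sm, ⟨m, rfl⟩, hwS⟩ := hw
      have hc : 0 < convPow μ m W := hwS W hWo hwW
      have hsum : (∑' n : ℕ, convPow μ (n + 1) U) = ⊤ := hr.2 U hUo hrU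
      have hle : ∀ n : ℕ, convPow μ (n + 1) U * convPow μ m W
          ≤ convPow μ (n + m + 1) V := by
        intro n
        have := hkey m (n + 1) U W V hUo hWo hV hUW
        rwa [show n + 1 + m = n + m + 1 by omega] at this
      have htop : (⊤ : ENNReal) ≤ ∑' k : ℕ, convPow μ (k + 1) V := by
        calc (⊤ : ENNReal) = (∑' n : ℕ, convPow μ (n + 1) U) * convPow μ m W := by
              rw [hsum, ENNReal.top_mul hc.ne']
          _ = ∑' n : ℕ, convPow μ (n + 1) U * convPow μ m W := ENNReal.tsum_mul_right.symm
          _ ≤ ∑' n : ℕ, convPow μ (n + m + 1) V := ENNReal.tsum_le_tsum hle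
          _ = ∑' n : ℕ, (fun k => convPow μ (k + 1) V) (n + m) := by
              refine tsum_congr fun n => rfl
          _ ≤ ∑' k : ℕ, convPow μ (k + 1) V :=
              ENNReal.tsum_comp_le_tsum_of_injective (add_left_injective m) _
      exact top_le_iff.mp htop
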